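/- Characteristic polynomial factorization at the disease-free equilibrium: Let J(E_0) be the real 5×5 matrix with rows [−α_h, 0, ω_h, 0, −β_h], [0, −k, 0, 0, β_h], [0, γ_h, −(α_h + ω_h), 0, 0], [0, −β_v Λ_v α_h/(α_v Λ_h), 0, −α_v, 0], [0, β_v Λ_v α_h/(α_v Λ_h), 0, 0, −α_v], where k = γ_h + ρ_h + α_h. Then the characteristic polynomial of J(E_0) equals (λ + α_h)(λ + α_v)(λ + α_h + ω_h)(λ² + (k + α_v) λ + α_v k (1 − R_0²)), where R_0² = β_h β_v Λ_v α_h / (Λ_h α_v² k). -/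

import Mathlib

open Polynomial

set_option maxHeartbeats 1600000

/-- Characteristic polynomial factorization of the Jacobian of the SIRS malaria model at
the disease-free equilibrium. -/
theorem sirs_malaria_charpoly_at_dfe
    (Λh αh βh γh ρh ωh Λv αv βv k R0sq : ℝ)
    (hΛh : 0 < Λh) (hαh : 0 < αh) (hβh : 0 < βh) (hγh : 0 < γh) (hρh : 0 < ρh)
    (hωh : 0 < ωh) (hΛv : 0 < Λv) (hαv : 0 < αv) (hβv : 0 < βv)
    (hk : k = γh + ρh + αh)
    (hR0sq : R0sq = βh * βv * Λv * αh / (Λh * αv ^ 2 * k))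
    (J : Matrix (Fin 5) (Fin 5) ℝ)
    (hJ : J = !![-αh, 0, ωh, 0, -βh;
                 0, -k, 0, 0, βh;
                 0, γh, -(αh + ωh), 0, 0;
                 0, -(βv * Λv * αh / (αv * Λh)), 0, -αv, 0;
                 0, βv * Λv * αh / (αv * Λh), 0, 0, -αv]) :
    J.charpoly =
      (X + C αh) * (X + C αv) * (X + C (αh + ωh)) *
        (X ^ 2 + C (k + αv) * X + C (αv * k * (1 - R0sq))) := by
  have hΛh' := hΛh.ne'
  have hαv' := hαv.ne'
  have hk' : k ≠ 0 := by rw [hk]; positivity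
  have hQ : αv * k * (1 - R0sq) = αv * k - βh * (βv * Λv * αh / (αv * Λh)) := by
    rw [hR0sq]; field_simp
  set q : ℝ := βv * Λv * αh / (αv * Λh) with hq
  have hc : J.charmatrix =
      !![X + C αh, 0, -C ωh, 0, C βh;
         0, X + C k, 0, 0, -C βh;
         0, -C γh, X + C (αh + ωh), 0, 0;
         0, C q, 0, X + C αv, 0;
         0, -C q, 0, 0, X + C αv] := by
    subst hJ
    apply Matrix.ext
    intro i j
    fin_cases i <;> fin_cases j <;>
      simp [Matrix.charmatrix_apply_eq, Matrix.charmatrix_apply_ne, Matrix.vecHead,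
        Matrix.vecTail, Function.comp] <;> ring
  have e1 : Fin.castSucc (2 : Fin 3) = (2 : Fin 4) := rfl
  have e2 : Fin.castSucc (2 : Fin 4) = (2 : Fin 5) := rfl
  have e3 : Fin.succAbove (3 : Fin 4) (2 : Fin 3) = (2 : Fin 4) := by decide
  rw [Matrix.charpoly, hc, hQ]
  simp [Matrix.det_succ_row_zero, Fin.sum_univ_succ, e1, e2, e3]
  ring
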